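/- Let u ∈ C^{p+1} and y ∈ C^{p+1} satisfy u'y = 1. Then the (2m-p)×(2m+p) matrix whose first 2m-p-1 rows form the banded matrix with y_1,...,y_{p+1} shifting one position right in each successive row (zeros elsewhere, and zeros in the last p+1 columns) and whose last row is (0,...,0, u_1,...,u_{p+1}) has full rank 2m-p. -/
import Mathlib

private lemma sum_ite_shift {q : ℕ} (f : Fin q → ℂ) (c s : ℕ) :
    (∑ k : Fin q, if c = s + k.1 then f k else 0)
      = if h : s ≤ c ∧ c - s < q then f ⟨c - s, h.2⟩ else 0 := by
  split_ifs with h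
  · rw [Finset.sum_eq_single (⟨c - s, h.2⟩ : Fin q)]
    · simp only [Fin.val_mk]
      rw [if_pos (by omega : c = s + (c - s))]
    · intro k _ hk
      rw [if_neg]; intro hc; apply hk; ext; simp; omega
    · simp
  · apply Finset.sum_eq_zero
    intro k _
    rw [if_neg]; intro hc
    have := k.isLt
    exact h ⟨by omega, by omega⟩

/-- Let `u, y ∈ ℂ^{p+1}` with `u'y = 1` (so `y ≠ 0` and `u ≠ 0`).
The `(2m - p) × (2m + p)` matrix whose first `2m - p - 1` rows form the banded block
with `y 0, …, y p` in columns `i, …, i + p` of row `i` (zeros elsewhere, in particular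
zeros in the last `p + 1` columns) and whose last row is `(0, …, 0, u 0, …, u p)`
has full rank `2m - p`. -/
theorem banded_matrix_full_rank (m p : ℕ) (hm : 1 ≤ m) (hp : p ≤ m - 1)
    (y u : Fin (p + 1) → ℂ) (huy : ∑ i, u i * y i = 1)
    (M : Matrix (Fin (2 * m - p)) (Fin (2 * m + p)) ℂ)
    (hM : ∀ i j, M i j =
      if i.1 < 2 * m - p - 1 then
        ∑ k : Fin (p + 1), if j.1 = i.1 + k.1 then y k else 0
      else
        ∑ k : Fin (p + 1), if j.1 = 2 * m - 1 + k.1 then u k else 0) :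
    M.rank = 2 * m - p := by
  classical
  have hpm : p < m := by omega
  have hy : ∃ k, y k ≠ 0 := by
    by_contra h; push_neg at h
    simp only [h, mul_zero, Finset.sum_const_zero] at huy
    exact one_ne_zero huy.symm
  have hu : ∃ k, u k ≠ 0 := by
    by_contra h; push_neg at h
    simp only [h, zero_mul, Finset.sum_const_zero] at huy
    exact one_ne_zero huy.symm
  obtain ⟨j0, hj0⟩ := hu
  set S : Finset (Fin (p + 1)) := Finset.univ.filter (fun k => y k ≠ 0) with hSdef
  have hS : S.Nonempty := by
    obtain ⟨k, hk⟩ := hy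
    exact ⟨k, by simp [hSdef, hk]⟩
  set k0 := S.min' hS with hk0def
  have hk0 : y k0 ≠ 0 := (Finset.mem_filter.1 (S.min'_mem hS)).2
  have hk0min : ∀ k : Fin (p + 1), k.1 < k0.1 → y k = 0 := by
    intro k hk
    by_contra h
    have hmem : k ∈ S := by simp [hSdef, h]
    have := S.min'_le k hmem
    rw [Fin.le_def] at this
    omega
  have hk0lt := k0.isLt
  have hj0lt := j0.isLt
  have hcol1 : ∀ t : Fin (2 * m - p), t.1 < 2 * m - p - 1 → k0.1 + t.1 < 2 * m + p := by
    intro t ht; omega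
  have hcol2 : 2 * m - 1 + j0.1 < 2 * m + p := by omega
  let g : Fin (2 * m - p) → Fin (2 * m + p) := fun t =>
    if h : t.1 < 2 * m - p - 1 then ⟨k0.1 + t.1, hcol1 t h⟩ else ⟨2 * m - 1 + j0.1, hcol2⟩
  let B : Matrix (Fin (2 * m - p)) (Fin (2 * m - p)) ℂ := M.submatrix id g
  -- below-diagonal entries vanish
  have hBlow : ∀ s t : Fin (2 * m - p), t < s → B s t = 0 := by
    intro s t hts
    rw [Fin.lt_def] at hts
    have hslt := s.isLt
    have ht : t.1 < 2 * m - p - 1 := by omega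
    have hg : (g t).1 = k0.1 + t.1 := by simp [g, ht]
    show M s (g t) = 0
    rw [hM]
    by_cases hs : s.1 < 2 * m - p - 1
    · rw [if_pos hs, sum_ite_shift]
      split_ifs with h
      · apply hk0min
        simp only [hg] at h ⊢
        omega
      · rfl
    · rw [if_neg hs, sum_ite_shift, dif_neg]
      rw [hg]
      intro hc
      omega
  -- diagonal entries are nonzero
  have hBdiag : ∀ s : Fin (2 * m - p), B s s ≠ 0 := by
    intro s
    show M s (g s) ≠ 0
    rw [hM]
    by_cases hs : s.1 < 2 * m - p - 1
    · have hg : (g s).1 = k0.1 + s.1 := by simp [g, hs]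
      rw [if_pos hs, sum_ite_shift, hg, dif_pos ⟨by omega, by omega⟩]
      have : (⟨k0.1 + s.1 - s.1, by omega⟩ : Fin (p + 1)) = k0 := by ext; simp
      rw [this]; exact hk0
    · have hg : (g s).1 = 2 * m - 1 + j0.1 := by simp [g, hs]
      rw [if_neg hs, sum_ite_shift, hg, dif_pos ⟨by omega, by omega⟩]
      have : (⟨2 * m - 1 + j0.1 - (2 * m - 1), by omega⟩ : Fin (p + 1)) = j0 := by ext; simp
      rw [this]; exact hj0
  have hdet : B.det ≠ 0 := by
    rw [Matrix.det_of_upperTriangular (fun i j h => hBlow i j h)]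
    exact Finset.prod_ne_zero_iff.2 fun s _ => hBdiag s
  have hBunit : IsUnit B := (Matrix.isUnit_iff_isUnit_det B).2 (isUnit_iff_ne_zero.2 hdet)
  have hBrank : B.rank = 2 * m - p := by
    rw [Matrix.rank_of_isUnit B hBunit, Fintype.card_fin]
  let P : Matrix (Fin (2 * m + p)) (Fin (2 * m - p)) ℂ :=
    Matrix.of fun j t => if j = g t then 1 else 0
  have hBP : B = M * P := by
    ext s t
    rw [Matrix.mul_apply]
    simp only [P, Matrix.of_apply, mul_ite, mul_one, mul_zero]
    rw [Finset.sum_ite_eq' Finset.univ (g t) (fun j => M s j)]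
    simp [B]
  have h1 : M.rank ≤ 2 * m - p := by
    have := M.rank_le_card_height
    simpa using this
  have h2 : 2 * m - p ≤ M.rank := by
    have h3 := Matrix.rank_mul_le_left M P
    rw [← hBP] at h3
    omega
  omega
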